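/- Let f be a Boolean network of dimension n and x ∈ 𝔹^n. For L ⊆ {1,…,n}, let ẑ^L ∈ P^n be the configuration obtained from x by exhaustively applying, to components outside L only, transitions from Boolean to dynamic states under the most permissive semantics (this configuration is uniquely defined). Then for any y ∈ 𝔹^n: y ∈ Reach_f(x) if and only if there exists L ⊆ {1,…,n} such that y ∈ γ(ẑ^L) and for every component i with ẑ^L_i ∉ 𝔹 there exists z ∈ γ(ẑ^L) with f_i(z) = y_i. -/

import Mathlib

inductive PState : Type
  | zero | up | down | one
deriving DecidableEq

def PState.ofBool : Bool → PState
  | false => .zero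
  | true  => .one

def PState.isBool (p : PState) : Prop := p = .zero ∨ p = .one

abbrev BN (n : ℕ) := (Fin n → Bool) → Fin n → Bool

def gamma {n : ℕ} (x : Fin n → PState) : Set (Fin n → Bool) :=
  {b | ∀ i (v : Bool), x i = PState.ofBool v → b i = v}

def mpStep {n : ℕ} (f : BN n) (x y : Fin n → PState) : Prop :=
  ∃ i : Fin n, x i ≠ y i ∧ (∀ j, j ≠ i → x j = y j) ∧
    ((y i = .up ∧ x i ≠ .one ∧ ∃ z ∈ gamma x, f z i = true) ∨
     (y i = .one ∧ x i = .up) ∨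
     (y i = .down ∧ x i ≠ .zero ∧ ∃ z ∈ gamma x, f z i = false) ∨
     (y i = .zero ∧ x i = .down))

def mpReachP {n : ℕ} (f : BN n) : (Fin n → PState) → (Fin n → PState) → Prop :=
  Relation.ReflTransGen (mpStep f)

def embed {n : ℕ} (x : Fin n → Bool) : Fin n → PState := fun i => PState.ofBool (x i)

def mpReach {n : ℕ} (f : BN n) (x : Fin n → Bool) : Set (Fin n → Bool) :=
  {y | mpReachP f (embed x) (embed y)}

def cubeSet {n : ℕ} (h : Fin n → Option Bool) : Set (Fin n → Bool) :=
  {z | ∀ i b, h i = some b → z i = b}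

def smaller {n : ℕ} (h h' : Fin n → Option Bool) : Prop :=
  ∀ i b, h' i = some b → h i = some b

def kClosed {n : ℕ} (f : BN n) (K : Finset (Fin n)) (h : Fin n → Option Bool) : Prop :=
  ∀ z ∈ cubeSet h, ∀ i ∈ K, h i = none ∨ h i = some (f z i)

def closedBy {n : ℕ} (f : BN n) (h : Fin n → Option Bool) : Prop :=
  ∀ z ∈ cubeSet h, f z ∈ cubeSet h

def smallestClosed {n : ℕ} (f : BN n) (x : Fin n → Bool) (h : Fin n → Option Bool) : Prop :=
  x ∈ cubeSet h ∧ closedBy f h ∧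
    ∀ h', x ∈ cubeSet h' → closedBy f h' → smaller h h'

def minClosed {n : ℕ} (f : BN n) (h : Fin n → Option Bool) : Prop :=
  closedBy f h ∧ ∀ h', closedBy f h' → smaller h' h → h' = h

def faStep {n : ℕ} (f : BN n) (x y : Fin n → Bool) : Prop :=
  ∃ i : Fin n, x i ≠ y i ∧ (∀ j, j ≠ i → x j = y j) ∧ y i = f x i

def aStep {n : ℕ} (f : BN n) (x y : Fin n → Bool) : Prop :=
  x ≠ y ∧ ∀ i, x i ≠ y i → y i = f x i

def mnStep {n m : ℕ} (F : (Fin n → Fin (m+1)) → Fin n → ℤ)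
    (x y : Fin n → Fin (m+1)) : Prop :=
  x ≠ y ∧ ∀ i, x i ≠ y i → ((y i : ℤ) = (x i : ℤ) + F x i)

def beta {n m : ℕ} (x : Fin n → Fin (m+1)) : Set (Fin n → Bool) :=
  {b | ∀ i, ((x i : ℕ) = 0 → b i = false) ∧ ((x i : ℕ) = m → b i = true)}

def refines {n m : ℕ} (F : (Fin n → Fin (m+1)) → Fin n → ℤ) (f : BN n) : Prop :=
  ∀ x i, (F x i > 0 → ∃ b ∈ beta x, f b i = true) ∧
         (F x i < 0 → ∃ b ∈ beta x, f b i = false)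

def alpha {n m : ℕ} (x : Fin n → Fin (m+1)) : Set (Fin n → PState) :=
  {p | ∀ i, ((x i : ℕ) = 0 ↔ p i = .zero) ∧ ((x i : ℕ) = m ↔ p i = .one)}

def bdStep {n : ℕ} (f : BN n) (L : Finset (Fin n)) (a b : Fin n → PState) : Prop :=
  mpStep f a b ∧ ∃ j, a j ≠ b j ∧ j ∉ L ∧ (a j).isBool ∧ ¬ (b j).isBool

def exhaustive {n : ℕ} (f : BN n) (x : Fin n → Bool) (L : Finset (Fin n))
    (zhat : Fin n → PState) : Prop :=
  Relation.ReflTransGen (bdStep f L) (embed x) zhat ∧ ∀ z', ¬ bdStep f L zhat z'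

/- ### Auxiliary development -/

instance : DecidablePred PState.isBool := fun p =>
  decidable_of_iff (p = .zero ∨ p = .one) Iff.rfl

lemma isBool_ofBool (v : Bool) : (PState.ofBool v).isBool := by
  cases v <;> simp [PState.ofBool, PState.isBool]

lemma ofBool_inj {a b : Bool} (h : PState.ofBool a = PState.ofBool b) : a = b := by
  cases a <;> cases b <;> simp_all [PState.ofBool]

lemma not_isBool_iff (p : PState) : ¬ p.isBool ↔ p = .up ∨ p = .down := by
  cases p <;> simp [PState.isBool]

lemma isBool_iff (p : PState) : p.isBool ↔ ∃ v, p = PState.ofBool v := by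
  constructor
  · rintro (h | h)
    exacts [⟨false, h⟩, ⟨true, h⟩]
  · rintro ⟨v, rfl⟩; exact isBool_ofBool v

/-- Invariant along the most-permissive run. -/
def Inv2 {n : ℕ} (f : BN n) (zhat c : Fin n → PState) : Prop :=
  (∀ i, (zhat i).isBool → c i = zhat i) ∧
  ∀ i, (c i = .up → ∃ z ∈ gamma zhat, f z i = true) ∧
       (c i = .down → ∃ z ∈ gamma zhat, f z i = false)

lemma gamma_mono {n : ℕ} {zhat c : Fin n → PState}
    (h : ∀ i, (zhat i).isBool → c i = zhat i) : gamma c ⊆ gamma zhat := by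
  intro z hz i v hv
  exact hz i v (by rw [h i (by rw [hv]; exact isBool_ofBool v), hv])

/-- in a single mpStep, a coordinate that is Boolean before and after is unchanged -/
lemma step_bool_eq {n : ℕ} {f : BN n} {c c' : Fin n → PState}
    (h : mpStep f c c') (i : Fin n) (h1 : (c i).isBool) (h2 : (c' i).isBool) :
    c' i = c i := by
  obtain ⟨j, hne, heq, hcase⟩ := h
  by_cases hij : i = j
  · subst hij
    rcases hcase with ⟨h', _⟩ | ⟨h', h''⟩ | ⟨h', _⟩ | ⟨h', h''⟩ <;>
      simp_all [PState.isBool]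
  · exact (heq i hij).symm

/-- preservation of the invariant -/
lemma inv2_pres {n : ℕ} {f : BN n} {L : Finset (Fin n)} {x : Fin n → Bool}
    {zhat c c' : Fin n → PState}
    (hex : exhaustive f x L zhat) (hstep : mpStep f c c') (hinv : Inv2 f zhat c)
    (hL : ∀ j, ¬ (c' j).isBool → j ∉ L) : Inv2 f zhat c' := by
  obtain ⟨i, hne, heq, hcase⟩ := hstep
  have hsub : gamma c ⊆ gamma zhat := gamma_mono hinv.1
  rcases hcase with ⟨hy, hx1, z, hz, hfz⟩ | ⟨hy, hx⟩ | ⟨hy, hx0, z, hz, hfz⟩ | ⟨hy, hx⟩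
  · -- to up
    have hnB : ¬ (zhat i).isBool := by
      intro hB
      apply hex.2 (Function.update zhat i .up)
      refine ⟨⟨i, ?_, ?_, Or.inl ⟨by simp, ?_, z, hsub hz, hfz⟩⟩,
        i, ?_, hL i (by rw [hy]; decide), hB, by simp [not_isBool_iff]⟩
      · simp only [Function.update_self]
        rcases hB with h | h <;> rw [h] <;> decide
      · intro j hj; rw [Function.update_of_ne hj]
      · rw [← hinv.1 i hB]; exact hx1
      · simp only [Function.update_self]
        rcases hB with h | h <;> rw [h] <;> decide
    constructor
    · intro j hB
      by_cases hji : j = i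
      · subst hji; exact absurd hB hnB
      · rw [← heq j hji]; exact hinv.1 j hB
    · intro j
      by_cases hji : j = i
      · subst hji
        refine ⟨fun _ => ⟨z, hsub hz, hfz⟩, fun h => ?_⟩
        rw [hy] at h; exact absurd h (by decide)
      · rw [← heq j hji]; exact hinv.2 j
  · -- up to one
    constructor
    · intro j hB
      by_cases hji : j = i
      · subst hji
        have := hinv.1 j hB; rw [hx] at this
        rw [← this] at hB; exact absurd hB (by decide)
      · rw [← heq j hji]; exact hinv.1 j hB
    · intro j
      by_cases hji : j = i
      · subst hji
        refine ⟨fun h => ?_, fun h => ?_⟩ <;> (rw [hy] at h; exact absurd h (by decide))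
      · rw [← heq j hji]; exact hinv.2 j
  · -- to down
    have hnB : ¬ (zhat i).isBool := by
      intro hB
      apply hex.2 (Function.update zhat i .down)
      refine ⟨⟨i, ?_, ?_, Or.inr (Or.inr (Or.inl ⟨by simp, ?_, z, hsub hz, hfz⟩))⟩,
        i, ?_, hL i (by rw [hy]; decide), hB, by simp [not_isBool_iff]⟩
      · simp only [Function.update_self]
        rcases hB with h | h <;> rw [h] <;> decide
      · intro j hj; rw [Function.update_of_ne hj]
      · rw [← hinv.1 i hB]; exact hx0
      · simp only [Function.update_self]
        rcases hB with h | h <;> rw [h] <;> decide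
    constructor
    · intro j hB
      by_cases hji : j = i
      · subst hji; exact absurd hB hnB
      · rw [← heq j hji]; exact hinv.1 j hB
    · intro j
      by_cases hji : j = i
      · subst hji
        refine ⟨fun h => ?_, fun _ => ⟨z, hsub hz, hfz⟩⟩
        rw [hy] at h; exact absurd h (by decide)
      · rw [← heq j hji]; exact hinv.2 j
  · -- down to zero
    constructor
    · intro j hB
      by_cases hji : j = i
      · subst hji
        have := hinv.1 j hB; rw [hx] at this
        rw [← this] at hB; exact absurd hB (by decide)
      · rw [← heq j hji]; exact hinv.1 j hB
    · intro j
      by_cases hji : j = i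
      · subst hji
        refine ⟨fun h => ?_, fun h => ?_⟩ <;> (rw [hy] at h; exact absurd h (by decide))
      · rw [← heq j hji]; exact hinv.2 j

/-- along the closure, coordinates that end Boolean never changed -/
lemma closure_bool_eq {n : ℕ} {f : BN n} {L : Finset (Fin n)} {a b : Fin n → PState}
    (h : Relation.ReflTransGen (bdStep f L) a b) :
    ∀ i, (b i).isBool → b i = a i := by
  induction h with
  | refl => intro i _; rfl
  | tail _ hstep ih =>
    intro i hB
    obtain ⟨⟨j, hne, heq, _⟩, k, hk1, _, hk3, hk4⟩ := hstep
    have hkj : k = j := by by_contra h'; exact hk1 (heq k h')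
    subst hkj
    by_cases hik : i = k
    · subst hik; exact absurd hB hk4
    · rw [← heq i hik]; exact ih i (by rw [heq i hik]; exact hB)

/-- coordinates made dynamic by the closure are outside L -/
lemma closure_nonbool_notin {n : ℕ} {f : BN n} {L : Finset (Fin n)}
    {x : Fin n → Bool} {b : Fin n → PState}
    (h : Relation.ReflTransGen (bdStep f L) (embed x) b) :
    ∀ i, ¬ (b i).isBool → i ∉ L := by
  induction h with
  | refl => intro i hi; exact absurd (isBool_ofBool (x i)) hi
  | tail _ hstep ih =>
    intro i hi
    obtain ⟨⟨j, hne, heq, _⟩, k, hk1, hkL, hk3, hk4⟩ := hstep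
    have hkj : k = j := by by_contra h'; exact hk1 (heq k h')
    subst hkj
    by_cases hik : i = k
    · subst hik; exact hkL
    · exact ih i (by rw [heq i hik]; exact hi)

lemma exists_exhaustive {n : ℕ} (f : BN n) (x : Fin n → Bool) (L : Finset (Fin n)) :
    ∃ zhat, exhaustive f x L zhat := by
  classical
  suffices h : ∀ (k : ℕ) (c : Fin n → PState),
      (Finset.univ.filter fun i => (c i).isBool).card ≤ k →
      Relation.ReflTransGen (bdStep f L) (embed x) c →
      ∃ zhat, exhaustive f x L zhat by
    exact h n (embed x) (le_trans (Finset.card_filter_le _ _) (by simp)) .refl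
  intro k
  induction k with
  | zero =>
    intro c hc hpath
    refine ⟨c, hpath, fun z' hz' => ?_⟩
    obtain ⟨_, j, _, _, hj3, _⟩ := hz'
    have hj : j ∈ Finset.univ.filter fun i => (c i).isBool := by
      simp [hj3]
    have := Finset.card_pos.mpr ⟨j, hj⟩
    omega
  | succ k ih =>
    intro c hc hpath
    by_cases hstep : ∃ z', bdStep f L c z'
    · obtain ⟨z', hz'⟩ := hstep
      refine ih z' ?_ (hpath.tail hz')
      obtain ⟨⟨j, hne, heq, _⟩, k', hk1, _, hk3, hk4⟩ := hz'
      have hkj : k' = j := by by_contra h'; exact hk1 (heq k' h')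
      subst hkj
      have hss : (Finset.univ.filter fun i => (z' i).isBool) ⊂
          Finset.univ.filter fun i => (c i).isBool := by
        constructor
        · intro i hi
          simp only [Finset.mem_filter, Finset.mem_univ, true_and] at hi ⊢
          by_cases hik : i = k'
          · subst hik; exact absurd hi hk4
          · rw [heq i hik]; exact hi
        · intro hsub
          have := hsub (by simp [hk3] : k' ∈ Finset.univ.filter fun i => (c i).isBool)
          simp only [Finset.mem_filter] at this
          exact hk4 this.2
      have := Finset.card_lt_card hss
      omega
    · push_neg at hstep
      exact ⟨c, hpath, hstep⟩

/-- if a coordinate is Boolean along a whole chain, it is constant -/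
lemma chain_const {n : ℕ} {f : BN n} {i : Fin n} :
    ∀ (l : List (Fin n → PState)) (c : Fin n → PState),
      List.Chain (mpStep f) c l → (∀ d ∈ c :: l, (d i).isBool) →
      c i = (c :: l).getLast (List.cons_ne_nil _ _) i := by
  intro l
  induction l with
  | nil => intro c _ _; rfl
  | cons c' l ih =>
    intro c hchain hall
    rw [List.Chain, List.chain_cons] at hchain
    rw [List.getLast_cons_cons]
    have h1 : c' i = c i := step_bool_eq hchain.1 i
      (hall c (by simp)) (hall c' (by simp))
    rw [← h1]
    exact ih c' hchain.2 (fun d hd => hall d (by simp at hd ⊢; tauto))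

lemma inv2_all {n : ℕ} {f : BN n} {L : Finset (Fin n)} {x : Fin n → Bool}
    {zhat : Fin n → PState} (hex : exhaustive f x L zhat) :
    ∀ (l : List (Fin n → PState)) (c : Fin n → PState),
      List.Chain (mpStep f) c l → Inv2 f zhat c →
      (∀ d ∈ c :: l, ∀ j, ¬ (d j).isBool → j ∉ L) →
      ∀ d ∈ c :: l, Inv2 f zhat d := by
  intro l
  induction l with
  | nil =>
    intro c _ hc _ d hd
    simp only [List.mem_singleton] at hd; subst hd; exact hc
  | cons c' l ih =>
    intro c hchain hc hL d hd
    rw [List.Chain, List.chain_cons] at hchain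
    have hc' : Inv2 f zhat c' :=
      inv2_pres hex hchain.1 hc (hL c' (by simp))
    rcases List.mem_cons.mp hd with h | h
    · subst h; exact hc
    · exact ih c' hchain.2 hc' (fun d hd j => hL d (by simp at hd ⊢; tauto) j) d h

/-- witness extraction -/
lemma wit_extract {n : ℕ} {f : BN n} {y : Fin n → Bool} {zhat : Fin n → PState} :
    ∀ (l : List (Fin n → PState)) (c : Fin n → PState),
      List.Chain (mpStep f) c l → (∀ d ∈ c :: l, Inv2 f zhat d) →
      (c :: l).getLast (List.cons_ne_nil _ _) = embed y →
      ∀ i, (∃ d ∈ c :: l, ¬ (d i).isBool) →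
      ∃ z ∈ gamma zhat, f z i = y i := by
  intro l
  induction l with
  | nil =>
    intro c _ _ hlast i hd
    obtain ⟨d, hd, hnd⟩ := hd
    simp only [List.mem_singleton] at hd; subst hd
    simp only [List.getLast_singleton'] at hlast; subst hlast
    exact absurd (isBool_ofBool (y i)) hnd
  | cons c' l ih =>
    intro c hchain hall hlast i hd
    rw [List.Chain, List.chain_cons] at hchain
    rw [List.getLast_cons_cons] at hlast
    by_cases htail : ∃ d ∈ c' :: l, ¬ (d i).isBool
    · exact ih c' hchain.2 (fun d hd => hall d (by simp at hd ⊢; tauto)) hlast i htail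
    · push_neg at htail
      obtain ⟨d, hdm, hnd⟩ := hd
      have hnc : ¬ (c i).isBool := by
        rcases List.mem_cons.mp hdm with h | h
        · rw [← h]; exact hnd
        · exact absurd hnd (not_not.mpr (htail d h))
      obtain ⟨j, hne, heq, hcase⟩ := hchain.1
      have hij : i = j := by
        by_contra h'
        exact hnc (by rw [heq i h']; rw [chain_const (f := f) l c' hchain.2 htail, hlast]; exact isBool_ofBool (y i))
      rw [hij]
      have hcj : c' j = embed y j := by
        rw [← hij, chain_const (f := f) l c' hchain.2 htail, hlast]
      have hinvc := hall c (by simp)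
      have hB : (embed y j).isBool := isBool_ofBool (y j)
      rw [← hcj] at hB
      rcases hcase with ⟨hy, _⟩ | ⟨hy, hx⟩ | ⟨hy, _⟩ | ⟨hy, hx⟩
      · rw [hy] at hB; exact absurd hB (by decide)
      · have hyt : y j = true := by
          have h2 : PState.ofBool (y j) = PState.one := hcj.symm.trans hy
          cases h : y j
          · rw [h] at h2; exact absurd h2 (by decide)
          · rfl
        rw [hyt]
        exact hinvc.2 j |>.1 hx
      · rw [hy] at hB; exact absurd hB (by decide)
      · have hyf : y j = false := by
          have h2 : PState.ofBool (y j) = PState.zero := hcj.symm.trans hy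
          cases h : y j
          · rfl
          · rw [h] at h2; exact absurd h2 (by decide)
        rw [hyf]
        exact hinvc.2 j |>.2 hx
section Phases
variable {n : ℕ} {f : BN n} {y : Fin n → Bool} {zhat : Fin n → PState}

/-- the intermediate target configuration -/
noncomputable def tgt (y : Fin n → Bool) (zhat : Fin n → PState) : Fin n → PState :=
  fun i => if (zhat i).isBool then zhat i else (if y i then .up else .down)

lemma gamma_zhat_sub {c : Fin n → PState}
    (h : ∀ j, c j = zhat j ∨ c j = tgt y zhat j) : gamma zhat ⊆ gamma c := by
  intro z hz i v hv
  rcases h i with h' | h'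
  · exact hz i v (h' ▸ hv)
  · rw [h'] at hv
    unfold tgt at hv
    by_cases hB : (zhat i).isBool
    · rw [if_pos hB] at hv; exact hz i v hv
    · rw [if_neg hB] at hv
      cases hyi : y i <;> rw [hyi] at hv <;> cases v <;> simp [PState.ofBool] at hv

lemma phaseB (hwit : ∀ i, ¬ (zhat i).isBool → ∃ z ∈ gamma zhat, f z i = y i) :
    ∀ (k : ℕ) (c : Fin n → PState),
      (Finset.univ.filter fun i => c i ≠ tgt y zhat i).card ≤ k →
      (∀ j, c j = zhat j ∨ c j = tgt y zhat j) →
      mpReachP f c (tgt y zhat) := by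
  intro k
  induction k with
  | zero =>
    intro c hc hhyp
    have : c = tgt y zhat := by
      funext i
      by_contra h'
      have : i ∈ Finset.univ.filter fun i => c i ≠ tgt y zhat i := by simp [h']
      have := Finset.card_pos.mpr ⟨i, this⟩
      omega
    rw [this]; exact Relation.ReflTransGen.refl
  | succ k ih =>
    intro c hc hhyp
    by_cases hct : c = tgt y zhat
    · rw [hct]; exact Relation.ReflTransGen.refl
    · obtain ⟨i, hi⟩ := Function.ne_iff.mp hct
      have hcz : c i = zhat i := by
        rcases hhyp i with h | h; exacts [h, absurd h hi]
      have hnB : ¬ (zhat i).isBool := by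
        intro hB; exact hi (by rw [hcz]; unfold tgt; rw [if_pos hB])
      have htgt : tgt y zhat i = if y i then PState.up else PState.down := by
        unfold tgt; rw [if_neg hnB]
      obtain ⟨z, hz, hfz⟩ := hwit i hnB
      have hzc : z ∈ gamma c := gamma_zhat_sub hhyp hz
      have hzd : zhat i = PState.up ∨ zhat i = PState.down :=
        (not_isBool_iff _).mp hnB
      -- next configuration
      have hstep : mpStep f c (Function.update c i (tgt y zhat i)) := by
        refine ⟨i, ?_, fun j hj => (Function.update_of_ne hj _ _).symm, ?_⟩
        · rw [Function.update_self]; exact hi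
        · rw [Function.update_self, htgt]
          cases hyi : y i
          · rw [if_neg (by simp)]
            refine Or.inr (Or.inr (Or.inl ⟨rfl, ?_, z, hzc, by rw [hfz, hyi]⟩))
            rw [hcz]
            rcases hzd with h | h <;> rw [h] <;> decide
          · rw [if_pos rfl]
            refine Or.inl ⟨rfl, ?_, z, hzc, by rw [hfz, hyi]⟩
            rw [hcz]
            rcases hzd with h | h <;> rw [h] <;> decide
      refine Relation.ReflTransGen.head hstep (ih _ ?_ ?_)
      · have hss : (Finset.univ.filter fun j =>
            Function.update c i (tgt y zhat i) j ≠ tgt y zhat j) ⊂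
            Finset.univ.filter fun j => c j ≠ tgt y zhat j := by
          constructor
          · intro j hj
            simp only [Finset.mem_filter, Finset.mem_univ, true_and] at hj ⊢
            by_cases hji : j = i
            · subst hji; rw [Function.update_self] at hj; exact absurd rfl hj
            · rwa [Function.update_of_ne hji] at hj
          · intro hsub
            have hmem : i ∈ Finset.univ.filter fun j => c j ≠ tgt y zhat j := by
              simp [hi]
            have := hsub hmem
            simp only [Finset.mem_filter, Function.update_self] at this
            exact this.2 rfl
        have := Finset.card_lt_card hss
        omega
      · intro j
        by_cases hji : j = i
        · subst hji; rw [Function.update_self]; exact Or.inr rfl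
        · rw [Function.update_of_ne hji]; exact hhyp j
  
lemma phaseC :
    ∀ (k : ℕ) (c : Fin n → PState),
      (Finset.univ.filter fun i => c i ≠ embed y i).card ≤ k →
      (∀ j, c j = embed y j ∨ (c j = .up ∧ y j = true) ∨ (c j = .down ∧ y j = false)) →
      mpReachP f c (embed y) := by
  intro k
  induction k with
  | zero =>
    intro c hc hhyp
    have : c = embed y := by
      funext i
      by_contra h'
      have : i ∈ Finset.univ.filter fun i => c i ≠ embed y i := by simp [h']
      have := Finset.card_pos.mpr ⟨i, this⟩
      omega
    rw [this]; exact Relation.ReflTransGen.refl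
  | succ k ih =>
    intro c hc hhyp
    by_cases hct : c = embed y
    · rw [hct]; exact Relation.ReflTransGen.refl
    · obtain ⟨i, hi⟩ := Function.ne_iff.mp hct
      have hstep : mpStep f c (Function.update c i (embed y i)) := by
        refine ⟨i, ?_, fun j hj => (Function.update_of_ne hj _ _).symm, ?_⟩
        · rw [Function.update_self]; exact hi
        · rw [Function.update_self]
          rcases hhyp i with h | ⟨h1, h2⟩ | ⟨h1, h2⟩
          · exact absurd h hi
          · refine Or.inr (Or.inl ⟨?_, h1⟩)
            show embed y i = PState.one
            simp [embed, h2, PState.ofBool]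
          · refine Or.inr (Or.inr (Or.inr ⟨?_, h1⟩))
            show embed y i = PState.zero
            simp [embed, h2, PState.ofBool]
      refine Relation.ReflTransGen.head hstep (ih _ ?_ ?_)
      · have hss : (Finset.univ.filter fun j =>
            Function.update c i (embed y i) j ≠ embed y j) ⊂
            Finset.univ.filter fun j => c j ≠ embed y j := by
          constructor
          · intro j hj
            simp only [Finset.mem_filter, Finset.mem_univ, true_and] at hj ⊢
            by_cases hji : j = i
            · subst hji; rw [Function.update_self] at hj; exact absurd rfl hj
            · rwa [Function.update_of_ne hji] at hj
          · intro hsub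
            have hmem : i ∈ Finset.univ.filter fun j => c j ≠ embed y j := by
              simp [hi]
            have := hsub hmem
            simp only [Finset.mem_filter, Function.update_self] at this
            exact this.2 rfl
        have := Finset.card_lt_card hss
        omega
      · intro j
        by_cases hji : j = i
        · subst hji; rw [Function.update_self]; exact Or.inl rfl
        · rw [Function.update_of_ne hji]; exact hhyp j

end Phases
theorem stmt18 {n : ℕ} (f : BN n) (x : Fin n → Bool) (y : Fin n → Bool) :
    y ∈ mpReach f x ↔
      ∃ (L : Finset (Fin n)) (zhat : Fin n → PState),
        exhaustive f x L zhat ∧ y ∈ gamma zhat ∧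
        ∀ i, ¬ (zhat i).isBool → ∃ z ∈ gamma zhat, f z i = y i := by
  classical
  constructor
  · intro hy
    obtain ⟨l, hchain, hlast⟩ := List.exists_isChain_cons_of_relationReflTransGen hy
    set cs : List (Fin n → PState) := embed x :: l with hcs
    set L : Finset (Fin n) :=
      Finset.univ.filter (fun i => ∀ c ∈ cs, (c i).isBool) with hLdef
    obtain ⟨zhat, hex⟩ := exists_exhaustive f x L
    have hbase : Inv2 f zhat (embed x) := by
      constructor
      · intro i hB; exact (closure_bool_eq hex.1 i hB).symm
      · intro i
        constructor <;> intro h <;>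
          (exact absurd (isBool_ofBool (x i))
            (by rw [show embed x i = PState.ofBool (x i) from rfl] at h; rw [h]; decide))
    have hLprop : ∀ d ∈ cs, ∀ j, ¬ (d j).isBool → j ∉ L := by
      intro d hd j hj hjL
      rw [hLdef] at hjL
      simp only [Finset.mem_filter] at hjL
      exact hj (hjL.2 d hd)
    have hall : ∀ d ∈ cs, Inv2 f zhat d :=
      inv2_all hex l (embed x) hchain hbase hLprop
    have hymem : embed y ∈ cs := by
      rw [← hlast]; exact List.getLast_mem _
    have hinvy : Inv2 f zhat (embed y) := hall _ hymem
    refine ⟨L, zhat, hex, ?_, ?_⟩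
    · intro i v hv
      have hB : (zhat i).isBool := by rw [hv]; exact isBool_ofBool v
      have h1 : embed y i = zhat i := hinvy.1 i hB
      rw [hv] at h1
      exact ofBool_inj h1
    · intro i hnB
      have hiL : i ∉ L := closure_nonbool_notin hex.1 i hnB
      have hex2 : ∃ d ∈ cs, ¬ (d i).isBool := by
        by_contra hcon
        push_neg at hcon
        apply hiL
        rw [hLdef]
        exact Finset.mem_filter.mpr ⟨Finset.mem_univ i, hcon⟩
      exact wit_extract l (embed x) hchain hall hlast i hex2
  · rintro ⟨L, zhat, hex, hyg, hwit⟩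
    have h1 : mpReachP f (embed x) zhat :=
      Relation.ReflTransGen.mono (by intro a b h; exact h.1) _ _ hex.1
    have h2 : mpReachP f zhat (tgt y zhat) :=
      phaseB hwit n zhat (le_trans (Finset.card_filter_le _ _) (by simp))
        (fun j => Or.inl rfl)
    have h3 : mpReachP f (tgt y zhat) (embed y) := by
      refine phaseC n (tgt y zhat) (le_trans (Finset.card_filter_le _ _) (by simp)) ?_
      intro j
      by_cases hB : (zhat j).isBool
      · left
        have ht : tgt y zhat j = zhat j := by unfold tgt; rw [if_pos hB]
        obtain ⟨v, hv⟩ := (isBool_iff _).mp hB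
        have := hyg j v hv
        rw [ht, hv, ← this]
        rfl
      · have ht : tgt y zhat j = if y j = true then PState.up else PState.down := by
          unfold tgt; rw [if_neg hB]
        cases hyj : y j
        · right; right
          constructor
          · rw [ht, hyj]; simp
          · rfl
        · right; left
          constructor
          · rw [ht, hyj]; simp
          · rfl
    exact (h1.trans h2).trans h3
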